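/- Let S be a σ-compact metric semigroup with identity satisfying Reiter's condition. Then S has the Liouville property for some tight probability measure: there exists a tight Borel probability measure π on S such that every π-harmonic function in LUC(S) is constant. -/

import Mathlib

open MeasureTheory BoundedContinuousFunction Filter Topology
open scoped ENNReal
set_option linter.unusedSectionVars false
set_option linter.unusedVariables false
set_option maxHeartbeats 1000000

/-- The total variation norm `‖μ - ν‖` of the difference of two (finite) measures. -/
noncomputable def tvDist {α : Type*} [MeasurableSpace α] (μ ν : Measure α) : ℝ≥0∞ :=
  (⨆ (E : Set α) (_ : MeasurableSet E), (μ E - ν E)) +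
    ⨆ (E : Set α) (_ : MeasurableSet E), (ν E - μ E)

/-- The left translate `δ_a * f` of a bounded continuous function `f`,
`(δ_a * f)(x) = f (a * x)`. -/
noncomputable def lTrans {S : Type*} [Semigroup S] [MetricSpace S] [ContinuousMul S]
    (a : S) (f : S →ᵇ ℂ) : S →ᵇ ℂ :=
  f.compContinuous ⟨fun x => a * x, continuous_const.mul continuous_id⟩

/-- `LUC S` is the space of bounded (left) uniformly continuous functions on `S`. -/
noncomputable def LUC (S : Type*) [Semigroup S] [MetricSpace S] [ContinuousMul S] :
    Submodule ℂ (S →ᵇ ℂ) where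
  carrier := {f | Continuous fun a : S => lTrans a f}
  add_mem' := by
    intro f g hf hg
    show Continuous fun a : S => lTrans a (f + g)
    have h : (fun a : S => lTrans a (f + g)) = fun a : S => lTrans a f + lTrans a g := by
      funext a; ext x; simp [lTrans]
    rw [h]; exact hf.add hg
  zero_mem' := by
    show Continuous fun a : S => lTrans a (0 : S →ᵇ ℂ)
    have h : (fun a : S => lTrans a (0 : S →ᵇ ℂ)) = fun _ => (0 : S →ᵇ ℂ) := by
      funext a; ext x; simp [lTrans]
    rw [h]; exact continuous_const
  smul_mem' := by
    intro c f hf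
    show Continuous fun a : S => lTrans a (c • f)
    have h : (fun a : S => lTrans a (c • f)) = fun a : S => c • lTrans a f := by
      funext a; ext x; simp [lTrans]
    rw [h]; exact hf.const_smul c

/-- A finite Borel measure is tight if all but `ε` of its mass sits in a compact set. -/
def IsTightMeas {S : Type*} [TopologicalSpace S] [MeasurableSpace S] (μ : Measure S) : Prop :=
  ∀ ε : ℝ≥0∞, 0 < ε → ∃ K : Set S, IsCompact K ∧ μ Kᶜ < ε

/-- Reiter's condition for a topological semigroup. -/
def ReiterCond (S : Type*) [Semigroup S] [MetricSpace S] [ContinuousMul S]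
    [MeasurableSpace S] : Prop :=
  ∀ ε : ℝ, 0 < ε → ∀ K : Set S, IsCompact K →
    ∃ θ : Measure S, IsProbabilityMeasure θ ∧ (∃ C : Set S, IsCompact C ∧ θ Cᶜ = 0) ∧
      ∀ s ∈ K, tvDist θ (Measure.map (fun y => s * y) θ) < ENNReal.ofReal ε


open Set
open scoped Pointwise

namespace ReiterLiouville

/-- length allowance -/
def Afn (k : ℕ) : ℕ := 4 ^ (k + 1)

/-- Reiter almost-invariance tolerance at stage `k`. -/
noncomputable def eps (k : ℕ) : ℝ := (1 / 2 : ℝ) ^ Afn k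

lemma Afn_mono : Monotone Afn := fun _ _ h =>
  Nat.pow_le_pow_right (by norm_num) (by omega)

lemma Afn_ge (k : ℕ) : k + 1 ≤ Afn k :=
  le_trans (by omega) (Nat.lt_pow_self (n := k+1) (by norm_num : 1 < 4)).le

lemma eps_pos (k : ℕ) : 0 < eps k := by unfold eps; positivity

lemma eps_le_one (k : ℕ) : eps k ≤ 1 :=
  pow_le_one₀ (by norm_num) (by norm_num)

lemma eps_anti {j k : ℕ} (h : j ≤ k) : eps k ≤ eps j :=
  pow_le_pow_of_le_one (by norm_num) (by norm_num) (Afn_mono h)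

lemma exists_le_Afn (ℓ : ℕ) : ∃ k, ℓ ≤ Afn k :=
  ⟨ℓ, le_trans (Nat.lt_pow_self (n := ℓ) (by norm_num : 1 < 4)).le (Nat.pow_le_pow_right (by norm_num) (by omega))⟩

/-- least `k` with `ℓ ≤ Afn k`. -/
noncomputable def Bfn (ℓ : ℕ) : ℕ := Nat.find (exists_le_Afn ℓ)

lemma le_Afn_Bfn (ℓ : ℕ) : ℓ ≤ Afn (Bfn ℓ) := Nat.find_spec (exists_le_Afn ℓ)

lemma le_Afn_of_Bfn_le {ℓ k : ℕ} (h : Bfn ℓ ≤ k) : ℓ ≤ Afn k :=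
  le_trans (le_Afn_Bfn ℓ) (Afn_mono h)

lemma Bfn_mono : Monotone Bfn := fun a b h =>
  Nat.find_mono (fun k hk => le_trans h hk)

lemma Bfn_le_of_le_Afn {ℓ k : ℕ} (h : ℓ ≤ Afn k) : Bfn ℓ ≤ k := Nat.find_le h

lemma eps_Bfn_le (ℓ : ℕ) : eps (Bfn ℓ) ≤ (1/2 : ℝ) ^ ℓ :=
  pow_le_pow_of_le_one (by norm_num) (by norm_num) (le_Afn_Bfn ℓ)

/-- the weight sequence -/
noncomputable def wfn (k : ℕ) : ℝ := (1 / 2 : ℝ) ^ (k + 1)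

lemma wfn_pos (k : ℕ) : 0 < wfn k := by unfold wfn; positivity

lemma summable_wfn : Summable wfn := by
  have := (summable_geometric_two).mul_left (1/2 : ℝ)
  simpa [wfn, pow_succ, mul_comm, one_div] using this.congr (fun n => by unfold wfn; ring)

lemma sum_wfn_range (R : ℕ) : ∑ k ∈ Finset.range R, wfn k = 1 - (1/2:ℝ)^R := by
  induction R with
  | zero => simp
  | succ n ih => rw [Finset.sum_range_succ, ih]; simp [wfn]; ring

lemma tsum_wfn : ∑' k, wfn k = 1 := by
  have h2 : ∑' k : ℕ, (1/2:ℝ)/2^k = 1 := tsum_geometric_two' 1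
  rw [← h2]; apply tsum_congr; intro k; simp [wfn, pow_succ, div_eq_mul_inv]; ring

lemma tsum_wfn_add (R : ℕ) : ∑' k, wfn (k + R) = (1/2:ℝ)^R := by
  have : ∀ k, wfn (k + R) = (1/2:ℝ)^R * wfn k := by
    intro k; simp [wfn, pow_add, pow_succ]; ring
  rw [tsum_congr this, tsum_mul_left, tsum_wfn, mul_one]


section SetPart
variable {S : Type*} [Monoid S] [MetricSpace S] [ContinuousMul S]

/-- products of length at most `ℓ` of elements of `X` (incl. empty product). -/
def KsetOf (X : Set S) : ℕ → Set S
  | 0 => {1}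
  | n + 1 => KsetOf X n ∪ KsetOf X n * X

lemma KsetOf_compact {X : Set S} (hX : IsCompact X) : ∀ ℓ, IsCompact (KsetOf X ℓ)
  | 0 => isCompact_singleton
  | (n+1) => (KsetOf_compact hX n).union ((KsetOf_compact hX n).mul hX)

lemma KsetOf_subset_succ (X : Set S) (ℓ : ℕ) : KsetOf X ℓ ⊆ KsetOf X (ℓ+1) :=
  Set.subset_union_left

lemma KsetOf_mono_len (X : Set S) {ℓ ℓ' : ℕ} (h : ℓ ≤ ℓ') : KsetOf X ℓ ⊆ KsetOf X ℓ' := by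
  induction h with
  | refl => exact subset_rfl
  | step _ ih => exact ih.trans (KsetOf_subset_succ X _)

lemma KsetOf_mono_set {X Y : Set S} (h : X ⊆ Y) : ∀ ℓ, KsetOf X ℓ ⊆ KsetOf Y ℓ
  | 0 => subset_rfl
  | (n+1) => Set.union_subset_union (KsetOf_mono_set h n)
      (Set.mul_subset_mul (KsetOf_mono_set h n) h)

lemma one_mem_KsetOf (X : Set S) (ℓ : ℕ) : (1 : S) ∈ KsetOf X ℓ :=
  KsetOf_mono_len X (Nat.zero_le ℓ) rfl

lemma subset_KsetOf_one (X : Set S) : X ⊆ KsetOf X 1 := by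
  intro x hx
  right
  exact ⟨1, rfl, x, hx, one_mul x⟩

lemma KsetOf_mul_subset (X : Set S) (ℓ : ℕ) {u z : S} (hu : u ∈ KsetOf X ℓ) (hz : z ∈ X) :
    u * z ∈ KsetOf X (ℓ + 1) :=
  Set.subset_union_right (Set.mul_mem_mul hu hz)

end SetPart

section Construction

variable {S : Type*} [Monoid S] [MetricSpace S] [ContinuousMul S] [SigmaCompactSpace S]
  [MeasurableSpace S] [BorelSpace S]

/-- the Reiter compact used at stage `k`, given the accumulated compact `U`. -/
def RK (k : ℕ) (U : Set S) : Set S :=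
  KsetOf (compactCovering S k ∪ U ∪ {1}) (Afn k)

lemma RK_compact (k : ℕ) {U : Set S} (hU : IsCompact U) : IsCompact (RK (S := S) k U) :=
  KsetOf_compact (((isCompact_compactCovering S k).union hU).union isCompact_singleton) _

noncomputable def pickθ (hR : ReiterCond S) (k : ℕ) (U : Set S) (hU : IsCompact U) :
    Measure S :=
  (hR (eps k) (eps_pos k) (RK k U) (RK_compact k hU)).choose

lemma pickθ_spec (hR : ReiterCond S) (k : ℕ) (U : Set S) (hU : IsCompact U) :
    IsProbabilityMeasure (pickθ hR k U hU) ∧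
      (∃ C : Set S, IsCompact C ∧ pickθ hR k U hU Cᶜ = 0) ∧
      ∀ s ∈ RK k U, tvDist (pickθ hR k U hU)
        (Measure.map (fun y => s * y) (pickθ hR k U hU)) < ENNReal.ofReal (eps k) :=
  (hR (eps k) (eps_pos k) (RK k U) (RK_compact k hU)).choose_spec

noncomputable def pickC (hR : ReiterCond S) (k : ℕ) (U : Set S) (hU : IsCompact U) : Set S :=
  (pickθ_spec hR k U hU).2.1.choose

lemma pickC_spec (hR : ReiterCond S) (k : ℕ) (U : Set S) (hU : IsCompact U) :
    IsCompact (pickC hR k U hU) ∧ pickθ hR k U hU (pickC hR k U hU)ᶜ = 0 :=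
  (pickθ_spec hR k U hU).2.1.choose_spec

/-- accumulated compact set after the first `k` stages. -/
noncomputable def acc (hR : ReiterCond S) : ℕ → {U : Set S // IsCompact U}
  | 0 => ⟨∅, isCompact_empty⟩
  | k + 1 =>
    ⟨(acc hR k).1 ∪ pickC hR k (acc hR k).1 (acc hR k).2,
      (acc hR k).2.union (pickC_spec hR k (acc hR k).1 (acc hR k).2).1⟩

noncomputable def θm (hR : ReiterCond S) (k : ℕ) : Measure S :=
  pickθ hR k (acc hR k).1 (acc hR k).2

noncomputable def Cm (hR : ReiterCond S) (k : ℕ) : Set S :=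
  pickC hR k (acc hR k).1 (acc hR k).2

instance θm_prob (hR : ReiterCond S) (k : ℕ) : IsProbabilityMeasure (θm hR k) :=
  (pickθ_spec hR k _ _).1

lemma Cm_compact (hR : ReiterCond S) (k : ℕ) : IsCompact (Cm hR k) :=
  (pickC_spec hR k _ _).1

lemma θm_null (hR : ReiterCond S) (k : ℕ) : θm hR k (Cm hR k)ᶜ = 0 :=
  (pickC_spec hR k _ _).2

/-- alphabet at stage `n`. -/
noncomputable def Gm (hR : ReiterCond S) (n : ℕ) : Set S :=
  compactCovering S n ∪ (acc hR n).1 ∪ {1}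

lemma Gm_compact (hR : ReiterCond S) (n : ℕ) : IsCompact (Gm hR n) :=
  ((isCompact_compactCovering S n).union (acc hR n).2).union isCompact_singleton

/-- the basic compact family. -/
noncomputable def Kn (hR : ReiterCond S) (n ℓ : ℕ) : Set S := KsetOf (Gm hR n) ℓ

lemma θm_inv (hR : ReiterCond S) (k : ℕ) {u : S} (hu : u ∈ Kn hR k (Afn k)) :
    tvDist (θm hR k) (Measure.map (fun y => u * y) (θm hR k)) < ENNReal.ofReal (eps k) :=
  (pickθ_spec hR k _ _).2.2 u hu

lemma acc_mono (hR : ReiterCond S) : Monotone (fun k => (acc hR k).1) := by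
  apply monotone_nat_of_le_succ
  intro k
  exact Set.subset_union_left

lemma Cm_subset_acc (hR : ReiterCond S) {k m : ℕ} (h : k < m) : Cm hR k ⊆ (acc hR m).1 :=
  le_trans Set.subset_union_right (acc_mono hR h)

lemma Gm_mono (hR : ReiterCond S) {n m : ℕ} (h : n ≤ m) : Gm hR n ⊆ Gm hR m :=
  Set.union_subset_union (Set.union_subset_union (compactCovering_subset S h)
    (acc_mono hR h)) subset_rfl

lemma Kn_compact (hR : ReiterCond S) (n ℓ : ℕ) : IsCompact (Kn hR n ℓ) :=
  KsetOf_compact (Gm_compact hR n) ℓ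

lemma Kn_mono (hR : ReiterCond S) {n m ℓ ℓ' : ℕ} (h : n ≤ m) (h' : ℓ ≤ ℓ') :
    Kn hR n ℓ ⊆ Kn hR m ℓ' :=
  (KsetOf_mono_set (Gm_mono hR h) ℓ).trans (KsetOf_mono_len _ h')

lemma one_mem_Kn (hR : ReiterCond S) (n ℓ : ℕ) : (1 : S) ∈ Kn hR n ℓ :=
  one_mem_KsetOf _ _

lemma mem_Kn_one (hR : ReiterCond S) {n : ℕ} {s : S} (h : s ∈ compactCovering S n) :
    s ∈ Kn hR n 1 :=
  subset_KsetOf_one _ (Or.inl (Or.inl h))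

/-- key multiplication stability. -/
lemma Kn_mul_Cm (hR : ReiterCond S) {n ℓ k R : ℕ} (hn : n ≤ R) (hk : k < R)
    {u z : S} (hu : u ∈ Kn hR n ℓ) (hz : z ∈ Cm hR k) : u * z ∈ Kn hR R (ℓ + 1) := by
  have hu' : u ∈ Kn hR R ℓ := Kn_mono hR hn le_rfl hu
  have hz' : z ∈ Gm hR R := Or.inl (Or.inr (Cm_subset_acc hR hk hz))
  exact KsetOf_mul_subset _ ℓ hu' hz'

/-- the Reiter compact at stage `k` is `Kn k (Afn k)`. -/
lemma RK_eq (hR : ReiterCond S) (k : ℕ) : RK k (acc hR k).1 = Kn hR k (Afn k) := rfl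

end Construction

section TV
variable {S : Type*} [MeasurableSpace S] [MetricSpace S] [BorelSpace S]

lemma meas_diff_le_of_tvDist {μ ν : Measure S} [IsProbabilityMeasure μ] [IsProbabilityMeasure ν]
    {e : ℝ} (he : 0 ≤ e) (h : tvDist μ ν ≤ ENNReal.ofReal e) {E : Set S}
    (hE : MeasurableSet E) : (μ E).toReal - (ν E).toReal ≤ e := by
  have h1 : μ E - ν E ≤ ENNReal.ofReal e := by
    refine le_trans ?_ h
    refine le_trans ?_ le_self_add
    exact le_iSup₂ (f := fun (E : Set S) (_ : MeasurableSet E) => μ E - ν E) E hE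
  have h2 : μ E ≤ ν E + ENNReal.ofReal e := tsub_le_iff_left.mp h1
  have h3 := ENNReal.toReal_mono (by finiteness) h2
  rw [ENNReal.toReal_add (by finiteness) (by finiteness), ENNReal.toReal_ofReal he] at h3
  linarith

lemma tvDist_comm (μ ν : Measure S) : tvDist μ ν = tvDist ν μ := add_comm _ _

/-- real-valued TV integral bound -/
lemma abs_integral_sub_integral_le_real {μ ν : Measure S} [IsProbabilityMeasure μ]
    [IsProbabilityMeasure ν] {g : S → ℝ} (hg : Continuous g) {M : ℝ} (hM : 0 ≤ M)
    (hgb : ∀ x, |g x| ≤ M) {e : ℝ} (he : 0 ≤ e) (h : tvDist μ ν ≤ ENNReal.ofReal e) :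
    |∫ x, g x ∂μ - ∫ x, g x ∂ν| ≤ 2 * M * e := by
  set h' : S → ℝ := fun x => g x + M with hh'
  have hcont : Continuous h' := hg.add continuous_const
  have h_nn : ∀ x, 0 ≤ h' x := fun x => by
    have := (abs_le.mp (hgb x)).1; simp only [hh']; linarith
  have h_bdd : ∀ x, h' x ≤ 2 * M := fun x => by
    have := (abs_le.mp (hgb x)).2; simp only [hh']; linarith
  have hint : ∀ (ρ : Measure S), IsProbabilityMeasure ρ → Integrable h' ρ := by
    intro ρ hρ
    refine ⟨hcont.aestronglyMeasurable, ?_⟩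
    apply HasFiniteIntegral.of_bounded (C := 2 * M)
    exact Eventually.of_forall (fun x => by
      rw [Real.norm_eq_abs, abs_of_nonneg (h_nn x)]; exact h_bdd x)
  have key : ∀ (ρ : Measure S), IsProbabilityMeasure ρ →
      ∫ x, h' x ∂ρ = ∫ t in Ioc (0:ℝ) (2*M), (ρ {a | t ≤ h' a}).toReal := by
    intro ρ hρ
    exact (hint ρ hρ).integral_eq_integral_Ioc_meas_le (Eventually.of_forall h_nn)
      (Eventually.of_forall h_bdd)
  have hshift : ∀ (ρ : Measure S), IsProbabilityMeasure ρ →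
      ∫ x, h' x ∂ρ = ∫ x, g x ∂ρ + M := by
    intro ρ hρ
    have hgint : Integrable g ρ := ⟨hg.aestronglyMeasurable, HasFiniteIntegral.of_bounded
      (C := M) (Eventually.of_forall (fun x => by rw [Real.norm_eq_abs]; exact hgb x))⟩
    simp only [hh']
    rw [integral_add hgint (integrable_const M), integral_const]
    simp
  -- measurability and integrability of the layer functions
  have hmeas : ∀ (ρ : Measure S), Measurable (fun t : ℝ => (ρ {a | t ≤ h' a}).toReal) := by
    intro ρ
    refine Measurable.ennreal_toReal (Antitone.measurable ?_)
    intro s t hst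
    exact measure_mono (fun a ha => le_trans hst ha)
  have hlayint : ∀ (ρ : Measure S), IsProbabilityMeasure ρ →
      IntegrableOn (fun t : ℝ => (ρ {a | t ≤ h' a}).toReal) (Ioc (0:ℝ) (2*M)) := by
    intro ρ hρ
    refine ⟨(hmeas ρ).aestronglyMeasurable, ?_⟩
    apply HasFiniteIntegral.of_bounded (C := 1)
    refine Eventually.of_forall (fun t => ?_)
    rw [Real.norm_eq_abs, abs_of_nonneg ENNReal.toReal_nonneg]
    exact ENNReal.toReal_le_of_le_ofReal (by norm_num) (by simpa using prob_le_one)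
  have hdiff : ∫ x, g x ∂μ - ∫ x, g x ∂ν =
      ∫ t in Ioc (0:ℝ) (2*M),
        ((μ {a | t ≤ h' a}).toReal - (ν {a | t ≤ h' a}).toReal) := by
    have e1 := hshift μ ‹_›; have e2 := hshift ν ‹_›
    have : ∫ x, g x ∂μ - ∫ x, g x ∂ν = ∫ x, h' x ∂μ - ∫ x, h' x ∂ν := by
      rw [e1, e2]; ring
    rw [this, key μ ‹_›, key ν ‹_›, ← integral_sub (hlayint μ ‹_›) (hlayint ν ‹_›)]
  rw [hdiff]
  have hb : ∀ t : ℝ, t ∈ Ioc (0:ℝ) (2*M) →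
      ‖(μ {a | t ≤ h' a}).toReal - (ν {a | t ≤ h' a}).toReal‖ ≤ e := by
    intro t _
    have hEm : MeasurableSet {a : S | t ≤ h' a} :=
      measurableSet_le measurable_const hcont.measurable
    rw [Real.norm_eq_abs, abs_sub_le_iff]
    constructor
    · exact meas_diff_le_of_tvDist he h hEm
    · exact meas_diff_le_of_tvDist he (by rwa [tvDist_comm]) hEm
  calc ‖∫ t in Ioc (0:ℝ) (2*M),
        ((μ {a | t ≤ h' a}).toReal - (ν {a | t ≤ h' a}).toReal)‖
      ≤ e * (volume (Ioc (0:ℝ) (2*M))).toReal := by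
        exact norm_setIntegral_le_of_norm_le_const measure_Ioc_lt_top hb
    _ ≤ 2 * M * e := by
        rw [Real.volume_Ioc, sub_zero, ENNReal.toReal_ofReal (by linarith)]
        exact le_of_eq (by ring)

/-- complex TV integral bound for bounded continuous functions -/
lemma norm_integral_sub_integral_le {μ ν : Measure S} [IsProbabilityMeasure μ]
    [IsProbabilityMeasure ν] (f : S →ᵇ ℂ) {e : ℝ} (he : 0 ≤ e)
    (h : tvDist μ ν ≤ ENNReal.ofReal e) :
    ‖∫ x, f x ∂μ - ∫ x, f x ∂ν‖ ≤ 4 * ‖f‖ * e := by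
  have hfi : ∀ (ρ : Measure S) (_ : IsProbabilityMeasure ρ), Integrable (fun x => f x) ρ :=
    fun ρ hρ => f.integrable ρ
  have hre := abs_integral_sub_integral_le_real (μ := μ) (ν := ν)
    (g := fun x => (f x).re) (Complex.continuous_re.comp f.continuous) (M := ‖f‖) (norm_nonneg f)
    (fun x => (Complex.abs_re_le_norm (f x)).trans (f.norm_coe_le_norm x)) he h
  have him := abs_integral_sub_integral_le_real (μ := μ) (ν := ν)
    (g := fun x => (f x).im) (Complex.continuous_im.comp f.continuous) (M := ‖f‖) (norm_nonneg f)
    (fun x => (Complex.abs_im_le_norm (f x)).trans (f.norm_coe_le_norm x)) he h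
  have ire : ∀ (ρ : Measure S) (hρ : IsProbabilityMeasure ρ),
      ∫ x, (f x).re ∂ρ = (∫ x, f x ∂ρ).re := by
    intro ρ hρ
    have := integral_re (𝕜 := ℂ) (μ := ρ) (hfi ρ hρ)
    simpa [RCLike.re_to_complex] using this
  have iim : ∀ (ρ : Measure S) (hρ : IsProbabilityMeasure ρ),
      ∫ x, (f x).im ∂ρ = (∫ x, f x ∂ρ).im := by
    intro ρ hρ
    have := integral_im (𝕜 := ℂ) (μ := ρ) (hfi ρ hρ)
    simpa [RCLike.im_to_complex] using this
  have hre' : ∫ x, (f x).re ∂μ - ∫ x, (f x).re ∂ν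
      = (∫ x, f x ∂μ - ∫ x, f x ∂ν).re := by
    rw [Complex.sub_re, ire μ ‹_›, ire ν ‹_›]
  have him' : ∫ x, (f x).im ∂μ - ∫ x, (f x).im ∂ν
      = (∫ x, f x ∂μ - ∫ x, f x ∂ν).im := by
    rw [Complex.sub_im, iim μ ‹_›, iim ν ‹_›]
  calc ‖∫ x, f x ∂μ - ∫ x, f x ∂ν‖
      ≤ |(∫ x, f x ∂μ - ∫ x, f x ∂ν).re| + |(∫ x, f x ∂μ - ∫ x, f x ∂ν).im| :=
        Complex.norm_le_abs_re_add_abs_im _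
    _ ≤ 2 * ‖f‖ * e + 2 * ‖f‖ * e := by
        rw [← hre', ← him']; exact add_le_add hre him
    _ = 4 * ‖f‖ * e := by ring


end TV

section Main

variable {S : Type*} [Monoid S] [MetricSpace S] [ContinuousMul S] [SigmaCompactSpace S]
  [MeasurableSpace S] [BorelSpace S]

/-- The Liouville measure. -/
noncomputable def pim (hR : ReiterCond S) : Measure S :=
  Measure.sum (fun k => ((1/2 : ℝ≥0∞) ^ (k+1)) • θm hR k)

lemma tsum_ennreal_w : ∑' k : ℕ, ((1/2 : ℝ≥0∞)) ^ (k+1) = 1 := by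
  have h1 : ∀ k : ℕ, ((1/2 : ℝ≥0∞)) ^ (k+1) = (1/2) * (1/2) ^ k := fun k => by
    rw [pow_succ, mul_comm]
  rw [tsum_congr h1, ENNReal.tsum_mul_left, ENNReal.tsum_geometric]
  have h2 : (1 : ℝ≥0∞) - 1/2 = 1/2 := by
    have := ENNReal.sub_half (a := 1) ENNReal.one_ne_top
    simpa using this
  rw [h2, one_div, inv_inv, ENNReal.inv_mul_cancel two_ne_zero ENNReal.ofNat_ne_top]

instance pim_prob (hR : ReiterCond S) : IsProbabilityMeasure (pim hR) := by
  constructor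
  rw [pim, Measure.sum_apply _ MeasurableSet.univ]
  simp only [Measure.smul_apply, measure_univ, smul_eq_mul, mul_one]
  exact tsum_ennreal_w

lemma ennreal_w_tail (N : ℕ) :
    ∑' k : ℕ, (if k < N then 0 else ((1/2 : ℝ≥0∞)) ^ (k+1)) = (1/2 : ℝ≥0∞) ^ N := by
  induction N with
  | zero => simpa using tsum_ennreal_w
  | succ N ih =>
    have key := ENNReal.tsum_eq_add_tsum_ite (f := fun k : ℕ =>
      (if k < N then 0 else ((1/2 : ℝ≥0∞)) ^ (k+1))) N
    beta_reduce at key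
    rw [ih] at key
    simp only [lt_self_iff_false, if_false] at key
    have key' : (1/2 : ℝ≥0∞)^N = (1/2)^(N+1)
        + ∑' (k : ℕ), (if k < N + 1 then 0 else ((1/2 : ℝ≥0∞))^(k+1)) := by
      rw [key]
      congr 1
      apply tsum_congr
      intro k
      by_cases h1 : k = N
      · subst h1; simp [Nat.lt_succ_self]
      · by_cases h2 : k < N
        · simp [h1, h2, Nat.lt_succ_of_lt h2]
        · have h3 : ¬ k < N + 1 := by omega
          simp [h1, h2, h3]
    have h2 : (1/2 : ℝ≥0∞) ^ N = (1/2: ℝ≥0∞)^(N+1) + (1/2 : ℝ≥0∞)^(N+1) := by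
      have hh : (1/2 : ℝ≥0∞) + 1/2 = 1 := ENNReal.add_halves 1
      rw [pow_succ, ← mul_add, hh, mul_one]
    rw [h2] at key'
    exact (ENNReal.add_right_inj (ENNReal.pow_ne_top (by norm_num))).mp key'.symm

lemma pim_tight (hR : ReiterCond S) : IsTightMeas (pim hR) := by
  intro ε hε
  obtain ⟨N, hN⟩ : ∃ N : ℕ, (1/2 : ℝ≥0∞) ^ N < ε := by
    obtain ⟨N, hN⟩ := ENNReal.exists_inv_two_pow_lt hε.ne'
    exact ⟨N, by simpa [one_div] using hN⟩
  refine ⟨(acc hR N).1, (acc hR N).2, ?_⟩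
  refine lt_of_le_of_lt ?_ hN
  have hmeas : MeasurableSet ((acc hR N).1)ᶜ :=
    ((acc hR N).2.isClosed.measurableSet).compl
  rw [pim, Measure.sum_apply _ hmeas]
  rw [← ennreal_w_tail N]
  apply ENNReal.tsum_le_tsum
  intro k
  by_cases hk : k < N
  · simp only [hk, if_true, Measure.smul_apply, smul_eq_mul]
    have : θm hR k ((acc hR N).1)ᶜ = 0 :=
      measure_mono_null (Set.compl_subset_compl.mpr (Cm_subset_acc hR hk)) (θm_null hR k)
    simp [this]
  · simp only [hk, if_false, Measure.smul_apply, smul_eq_mul]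
    calc ((1/2 : ℝ≥0∞)) ^ (k+1) * θm hR k ((acc hR N).1)ᶜ
        ≤ ((1/2 : ℝ≥0∞)) ^ (k+1) * 1 := mul_le_mul_right prob_le_one _
      _ = ((1/2 : ℝ≥0∞)) ^ (k+1) := mul_one _

lemma integrable_trans (f : S →ᵇ ℂ) (x : S) (ρ : Measure S) [IsFiniteMeasure ρ] :
    Integrable (fun y => f (x * y)) ρ := by
  have hc : Continuous fun y : S => f (x * y) :=
    f.continuous.comp (continuous_const.mul continuous_id)
  exact ⟨hc.aestronglyMeasurable, HasFiniteIntegral.of_bounded (C := ‖f‖)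
    (Eventually.of_forall (fun y => f.norm_coe_le_norm _))⟩

lemma norm_Ik_le (f : S →ᵇ ℂ) (x : S) (ρ : Measure S) [IsProbabilityMeasure ρ] :
    ‖∫ y, f (x * y) ∂ρ‖ ≤ ‖f‖ := by
  have := norm_integral_le_of_norm_le_const (μ := ρ) (f := fun y => f (x * y)) (C := ‖f‖)
    (Eventually.of_forall (fun y => f.norm_coe_le_norm _))
  simpa using this

/-- good-stage estimate via almost invariance -/
lemma good_estimate (hR : ReiterCond S) (f : S →ᵇ ℂ) {k n ℓ : ℕ} (hn : n ≤ k)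
    (hl : ℓ ≤ Afn k) {u u' : S} (hu : u ∈ Kn hR n ℓ) (hu' : u' ∈ Kn hR n ℓ) :
    ‖(∫ y, f (u * y) ∂θm hR k) - ∫ y, f (u' * y) ∂θm hR k‖ ≤ 8 * ‖f‖ * eps k := by
  have hmap : ∀ v : S, ∫ x, f x ∂(Measure.map (fun y => v * y) (θm hR k))
      = ∫ y, f (v * y) ∂θm hR k := by
    intro v
    exact integral_map (continuous_const.mul continuous_id).aemeasurable
      f.continuous.aestronglyMeasurable
  have hone : ∀ v : S, v ∈ Kn hR n ℓ →
      ‖(∫ y, f (v * y) ∂θm hR k) - ∫ x, f x ∂θm hR k‖ ≤ 4 * ‖f‖ * eps k := by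
    intro v hv
    have hv' : v ∈ Kn hR k (Afn k) := Kn_mono hR hn hl hv
    have htv := (θm_inv hR k hv').le
    haveI : IsProbabilityMeasure (Measure.map (fun y => v * y) (θm hR k)) :=
      Measure.isProbabilityMeasure_map (continuous_const.mul continuous_id).aemeasurable
    have := norm_integral_sub_integral_le (μ := Measure.map (fun y => v * y) (θm hR k))
      (ν := θm hR k) f (eps_pos k).le (by rwa [tvDist_comm])
    rw [hmap v] at this
    exact this
  calc ‖(∫ y, f (u * y) ∂θm hR k) - ∫ y, f (u' * y) ∂θm hR k‖
      ≤ ‖(∫ y, f (u * y) ∂θm hR k) - ∫ x, f x ∂θm hR k‖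
        + ‖(∫ x, f x ∂θm hR k) - ∫ y, f (u' * y) ∂θm hR k‖ := by
        have : (∫ y, f (u * y) ∂θm hR k) - ∫ y, f (u' * y) ∂θm hR k
            = ((∫ y, f (u * y) ∂θm hR k) - ∫ x, f x ∂θm hR k)
              + ((∫ x, f x ∂θm hR k) - ∫ y, f (u' * y) ∂θm hR k) := by ring
        rw [this]; exact norm_add_le _ _
    _ ≤ 4 * ‖f‖ * eps k + 4 * ‖f‖ * eps k := by
        refine add_le_add (hone u hu) ?_
        rw [norm_sub_rev]; exact hone u' hu'
    _ = 8 * ‖f‖ * eps k := by ring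

end Main

section MainInd

variable {S : Type*} [Monoid S] [MetricSpace S] [ContinuousMul S] [SigmaCompactSpace S]
  [MeasurableSpace S] [BorelSpace S]

/-- the recursive bound -/
noncomputable def betaFn : ℕ → ℕ → ℕ → ℝ
  | 0, _, _ => 2
  | (m+1), n, ℓ =>
    (1 - (1/2 : ℝ) ^ (max n (Bfn ℓ))) * betaFn m (max n (Bfn ℓ)) (ℓ+1)
      + 8 * eps (max n (Bfn ℓ))

lemma half_pow_le_one (r : ℕ) : (1/2 : ℝ) ^ r ≤ 1 :=
  pow_le_one₀ (by norm_num) (by norm_num)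

lemma betaFn_nonneg : ∀ m n ℓ, 0 ≤ betaFn m n ℓ
  | 0, _, _ => by norm_num [betaFn]
  | (m+1), n, ℓ => by
    have h1 : (0:ℝ) ≤ 1 - (1/2:ℝ) ^ (max n (Bfn ℓ)) := by
      have := half_pow_le_one (max n (Bfn ℓ)); linarith
    have h2 := betaFn_nonneg m (max n (Bfn ℓ)) (ℓ+1)
    have h3 := (eps_pos (max n (Bfn ℓ))).le
    have h4 : (0:ℝ) ≤ (1 - (1/2:ℝ) ^ (max n (Bfn ℓ))) * betaFn m (max n (Bfn ℓ)) (ℓ+1) :=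
      mul_nonneg h1 h2
    show (0:ℝ) ≤ (1 - (1/2 : ℝ) ^ (max n (Bfn ℓ))) * betaFn m (max n (Bfn ℓ)) (ℓ+1)
      + 8 * eps (max n (Bfn ℓ))
    linarith

lemma betaFn_succ (m n ℓ : ℕ) : betaFn (m+1) n ℓ =
    (1 - (1/2 : ℝ) ^ (max n (Bfn ℓ))) * betaFn m (max n (Bfn ℓ)) (ℓ+1)
      + 8 * eps (max n (Bfn ℓ)) := rfl

lemma main_ind (hR : ReiterCond S) (f : S →ᵇ ℂ)
    (hf : ∀ x : S, ∫ y, f (x * y) ∂(pim hR) = f x) :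
    ∀ (m n ℓ : ℕ) (u u' : S), u ∈ Kn hR n ℓ → u' ∈ Kn hR n ℓ →
      ‖f u - f u'‖ ≤ ‖f‖ * betaFn m n ℓ := by
  have hdecomp : ∀ x : S, f x = ∑' k, wfn k • ∫ y, f (x * y) ∂θm hR k := by
    intro x
    conv_lhs => rw [← hf x]
    have hInt := integrable_trans f x (pim hR)
    simp only [pim] at hInt ⊢
    rw [integral_sum_measure hInt]
    apply tsum_congr
    intro k
    rw [integral_smul_measure]
    congr 1
    rw [ENNReal.toReal_pow, wfn]
    norm_num
  have hsummable : ∀ x : S, Summable (fun k => wfn k • ∫ y, f (x * y) ∂θm hR k) := by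
    intro x
    apply Summable.of_norm_bounded (g := fun k => wfn k * ‖f‖) (summable_wfn.mul_right _)
    intro k
    rw [norm_smul, Real.norm_eq_abs, abs_of_nonneg (wfn_pos k).le]
    exact mul_le_mul_of_nonneg_left (norm_Ik_le f x _) (wfn_pos k).le
  intro m
  induction m with
  | zero =>
    intro n ℓ u u' hu hu'
    show ‖f u - f u'‖ ≤ ‖f‖ * 2
    calc ‖f u - f u'‖ ≤ ‖f u‖ + ‖f u'‖ := norm_sub_le _ _
      _ ≤ ‖f‖ + ‖f‖ := add_le_add (f.norm_coe_le_norm u) (f.norm_coe_le_norm u')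
      _ = ‖f‖ * 2 := by ring
  | succ m ih =>
    intro n ℓ u u' hu hu'
    set R := max n (Bfn ℓ) with hRdef
    set C1 : ℝ := ‖f‖ * betaFn m R (ℓ+1) with hC1
    have hC1nn : 0 ≤ C1 := mul_nonneg (norm_nonneg f) (betaFn_nonneg m R (ℓ+1))
    set D : ℕ → ℝ := fun k => if k < R then wfn k * C1 else wfn k * (8 * ‖f‖ * eps k)
      with hD
    have hterm : ∀ k, ‖wfn k • ((∫ y, f (u * y) ∂θm hR k) - ∫ y, f (u' * y) ∂θm hR k)‖
        ≤ D k := by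
      intro k
      rw [norm_smul, Real.norm_eq_abs, abs_of_nonneg (wfn_pos k).le]
      by_cases hk : k < R
      · rw [hD]; simp only [if_pos hk]
        refine mul_le_mul_of_nonneg_left ?_ (wfn_pos k).le
        have hint1 := integrable_trans f u (θm hR k)
        have hint2 := integrable_trans f u' (θm hR k)
        rw [← integral_sub hint1 hint2]
        have hCm : ∀ᵐ y ∂θm hR k, y ∈ Cm hR k := by
          rw [ae_iff]
          have : {y : S | ¬ y ∈ Cm hR k} = (Cm hR k)ᶜ := rfl
          rw [this]
          exact θm_null hR k
        have hae : ∀ᵐ y ∂θm hR k, ‖f (u * y) - f (u' * y)‖ ≤ C1 := by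
          filter_upwards [hCm] with y hy
          have h1 : u * y ∈ Kn hR R (ℓ+1) := Kn_mul_Cm hR (le_max_left _ _) hk hu hy
          have h2 : u' * y ∈ Kn hR R (ℓ+1) := Kn_mul_Cm hR (le_max_left _ _) hk hu' hy
          exact ih R (ℓ+1) (u*y) (u'*y) h1 h2
        have := norm_integral_le_of_norm_le_const (μ := θm hR k) hae
        simpa using this
      · rw [hD]; simp only [if_neg hk]
        push_neg at hk
        refine mul_le_mul_of_nonneg_left ?_ (wfn_pos k).le
        exact good_estimate hR f (le_trans (le_max_left _ _) hk)
          (le_Afn_of_Bfn_le (le_trans (le_max_right _ _) hk)) hu hu'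
    have hDnn : ∀ k, 0 ≤ D k := fun k =>
      le_trans (norm_nonneg _) (hterm k)
    have hDsummable : Summable D := by
      apply Summable.of_norm_bounded (g := fun k => wfn k * (C1 + 8 * ‖f‖))
        (summable_wfn.mul_right _)
      intro k
      rw [Real.norm_eq_abs, abs_of_nonneg (hDnn k), hD]
      by_cases hk : k < R
      · simp only [if_pos hk]
        have h8 : (0:ℝ) ≤ 8 * ‖f‖ := by positivity
        nlinarith [wfn_pos k]
      · simp only [if_neg hk]
        have h8 : 8 * ‖f‖ * eps k ≤ C1 + 8 * ‖f‖ := by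
          have h1 := eps_le_one k
          nlinarith [norm_nonneg f, (eps_pos k).le]
        exact mul_le_mul_of_nonneg_left h8 (wfn_pos k).le
    have hsub : f u - f u'
        = ∑' k, wfn k • ((∫ y, f (u * y) ∂θm hR k) - ∫ y, f (u' * y) ∂θm hR k) := by
      rw [hdecomp u, hdecomp u', ← Summable.tsum_sub (hsummable u) (hsummable u')]
      apply tsum_congr
      intro k
      rw [smul_sub]
    rw [hsub]
    have hnormsum : Summable (fun k =>
        ‖wfn k • ((∫ y, f (u * y) ∂θm hR k) - ∫ y, f (u' * y) ∂θm hR k)‖) := by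
      apply Summable.of_norm_bounded (g := D) hDsummable
      intro k
      rw [norm_norm]
      exact hterm k
    calc ‖∑' k, wfn k • ((∫ y, f (u * y) ∂θm hR k) - ∫ y, f (u' * y) ∂θm hR k)‖
        ≤ ∑' k, ‖wfn k • ((∫ y, f (u * y) ∂θm hR k) - ∫ y, f (u' * y) ∂θm hR k)‖ :=
          norm_tsum_le_tsum_norm hnormsum
      _ ≤ ∑' k, D k := Summable.tsum_le_tsum hterm hnormsum hDsummable
      _ ≤ ‖f‖ * betaFn (m+1) n ℓ := by
          rw [← Summable.sum_add_tsum_nat_add R hDsummable]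
          have hfirst : ∑ k ∈ Finset.range R, D k = (1 - (1/2:ℝ)^R) * C1 := by
            rw [show ∑ k ∈ Finset.range R, D k = ∑ k ∈ Finset.range R, wfn k * C1 from
              Finset.sum_congr rfl (fun k hk => by
                rw [hD]; simp only [if_pos (Finset.mem_range.mp hk)])]
            rw [← Finset.sum_mul, sum_wfn_range]
          have hsecond : ∑' k, D (k + R) ≤ 8 * ‖f‖ * eps R := by
            have h1 : ∀ k : ℕ, D (k + R) ≤ wfn (k + R) * (8 * ‖f‖ * eps R) := by
              intro k
              rw [hD]
              simp only [if_neg (by omega : ¬ k + R < R)]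
              refine mul_le_mul_of_nonneg_left ?_ (wfn_pos _).le
              have := eps_anti (le_add_self (a := R) (b := k))
              have h8 : (0:ℝ) ≤ 8 * ‖f‖ := by positivity
              nlinarith [eps_anti (Nat.le_add_left R k)]
            have hs1 : Summable (fun k => D (k + R)) :=
              (summable_nat_add_iff R).mpr hDsummable
            have hs2 : Summable (fun k => wfn (k + R) * (8 * ‖f‖ * eps R)) :=
              ((summable_nat_add_iff R).mpr summable_wfn).mul_right _
            calc ∑' k, D (k + R) ≤ ∑' k, wfn (k + R) * (8 * ‖f‖ * eps R) :=
                  Summable.tsum_le_tsum h1 hs1 hs2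
              _ = (1/2:ℝ)^R * (8 * ‖f‖ * eps R) := by rw [tsum_mul_right, tsum_wfn_add]
              _ ≤ 8 * ‖f‖ * eps R := by
                  have h8 : (0:ℝ) ≤ 8 * ‖f‖ * eps R := by
                    have := (eps_pos R).le; positivity
                  nlinarith [half_pow_le_one R, pow_nonneg (by norm_num : (0:ℝ) ≤ 1/2) R]
          rw [hfirst, betaFn_succ, hC1, ← hRdef]
          have : (1 - (1/2:ℝ)^R) * (‖f‖ * betaFn m R (ℓ+1))
              = ‖f‖ * ((1 - (1/2:ℝ)^R) * betaFn m R (ℓ+1)) := by ring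
          rw [this]
          have hgoal : ‖f‖ * ((1 - (1/2:ℝ)^R) * betaFn m R (ℓ+1)) + 8 * ‖f‖ * eps R
              = ‖f‖ * ((1 - (1/2:ℝ)^R) * betaFn m R (ℓ+1) + 8 * eps R) := by ring
          linarith [hsecond]

end MainInd

section Numeric

lemma prod_factor_nonneg (r : ℕ) : (0:ℝ) ≤ 1 - (1/2:ℝ) ^ r := by
  have := half_pow_le_one r; linarith

lemma betaFn_le_closed (m : ℕ) : ∀ n ℓ : ℕ, betaFn m n ℓ ≤
    2 * ∏ i ∈ Finset.range m, (1 - (1/2:ℝ) ^ (max n (Bfn (ℓ+i))))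
      + 8 * ∑ j ∈ Finset.range m, eps (max n (Bfn (ℓ+j))) := by
  induction m with
  | zero => intro n ℓ; simp [betaFn]
  | succ m ih =>
    intro n ℓ
    set R := max n (Bfn ℓ) with hRdef
    have hmax : ∀ i : ℕ, max R (Bfn (ℓ+1+i)) = max n (Bfn (ℓ+(i+1))) := by
      intro i
      rw [hRdef, max_assoc, max_eq_right (Bfn_mono (by omega : ℓ ≤ ℓ+1+i))]
      congr 2
      omega
    have hq : (0:ℝ) ≤ 1 - (1/2:ℝ)^R := prod_factor_nonneg R
    have hq1 : 1 - (1/2:ℝ)^R ≤ 1 := by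
      have : (0:ℝ) ≤ (1/2:ℝ)^R := by positivity
      linarith
    have hA : ∏ i ∈ Finset.range m, (1 - (1/2:ℝ) ^ (max R (Bfn (ℓ+1+i))))
        = ∏ i ∈ Finset.range m, (1 - (1/2:ℝ) ^ (max n (Bfn (ℓ+(i+1))))) :=
      Finset.prod_congr rfl (fun i _ => by rw [hmax i])
    have hB : ∑ j ∈ Finset.range m, eps (max R (Bfn (ℓ+1+j)))
        = ∑ j ∈ Finset.range m, eps (max n (Bfn (ℓ+(j+1)))) :=
      Finset.sum_congr rfl (fun j _ => by rw [hmax j])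
    have hih := ih R (ℓ+1)
    rw [hA, hB] at hih
    set A := ∏ i ∈ Finset.range m, (1 - (1/2:ℝ) ^ (max n (Bfn (ℓ+(i+1))))) with hAdef
    set B := ∑ j ∈ Finset.range m, eps (max n (Bfn (ℓ+(j+1)))) with hBdef
    have hAnn : 0 ≤ A := Finset.prod_nonneg (fun i _ => prod_factor_nonneg _)
    have hBnn : 0 ≤ B := Finset.sum_nonneg (fun j _ => (eps_pos _).le)
    have hprodsucc : ∏ i ∈ Finset.range (m+1), (1 - (1/2:ℝ) ^ (max n (Bfn (ℓ+i))))
        = A * (1 - (1/2:ℝ)^R) := by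
      rw [Finset.prod_range_succ']
      simp only [Nat.add_zero]
      rfl
    have hsumsucc : ∑ j ∈ Finset.range (m+1), eps (max n (Bfn (ℓ+j)))
        = B + eps R := by
      rw [Finset.sum_range_succ']
      simp only [Nat.add_zero]
      rfl
    rw [betaFn_succ, hprodsucc, hsumsucc, ← hRdef]
    have hstep : (1 - (1/2:ℝ)^R) * betaFn m R (ℓ+1)
        ≤ (1 - (1/2:ℝ)^R) * (2 * A + 8 * B) :=
      mul_le_mul_of_nonneg_left hih hq
    nlinarith [eps_pos R, mul_nonneg hq hBnn]

lemma eps_le_half_pow (n : ℕ) : eps n ≤ (1/2:ℝ) ^ n :=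
  pow_le_pow_of_le_one (by norm_num) (by norm_num) (le_trans (by omega) (Afn_ge n))

/-- the tail-sum estimate, uniform in `m` -/
lemma sum_eps_le {n J : ℕ} (m : ℕ) :
    ∑ j ∈ Finset.range m, eps (max n (Bfn (1+j))) ≤ J * eps n + (1/2:ℝ)^J := by
  set g1 : ℕ → ℝ := fun j => if j < J then eps n else 0 with hg1
  set g2 : ℕ → ℝ := fun j => if j < J then 0 else wfn j with hg2
  have hbound : ∀ j, eps (max n (Bfn (1+j))) ≤ g1 j + g2 j := by
    intro j
    by_cases hj : j < J
    · rw [hg1, hg2]; simp only [if_pos hj]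
      have := eps_anti (le_max_left n (Bfn (1+j)))
      linarith
    · rw [hg1, hg2]; simp only [if_neg hj]
      have h1 : eps (max n (Bfn (1+j))) ≤ eps (Bfn (1+j)) :=
        eps_anti (le_max_right _ _)
      have h2 : eps (Bfn (1+j)) ≤ (1/2:ℝ)^(1+j) := eps_Bfn_le (1+j)
      have h3 : (1/2:ℝ)^(1+j) = wfn j := by rw [wfn]; congr 1; omega
      linarith [h3 ▸ h2]
  have hs1 : Summable g1 := summable_of_ne_finset_zero (s := Finset.range J)
    (fun j hj => by rw [hg1]; simp only [Finset.mem_range] at hj; simp [hj])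
  have hs2 : Summable g2 := by
    apply Summable.of_norm_bounded (g := wfn) summable_wfn
    intro j
    rw [hg2, Real.norm_eq_abs]
    by_cases hj : j < J
    · simp [hj, (wfn_pos j).le]
    · simp [hj, abs_of_nonneg (wfn_pos j).le]
  have hgnn : ∀ j, 0 ≤ g1 j + g2 j := by
    intro j
    by_cases hj : j < J
    · rw [hg1, hg2]; simp [hj, (eps_pos n).le]
    · rw [hg1, hg2]; simp [hj, (wfn_pos j).le]
  calc ∑ j ∈ Finset.range m, eps (max n (Bfn (1+j)))
      ≤ ∑ j ∈ Finset.range m, (g1 j + g2 j) :=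
        Finset.sum_le_sum (fun j _ => hbound j)
    _ ≤ ∑' j, (g1 j + g2 j) := Summable.sum_le_tsum _ (fun j _ => hgnn j) (hs1.add hs2)
    _ = (∑' j, g1 j) + ∑' j, g2 j := Summable.tsum_add hs1 hs2
    _ ≤ J * eps n + (1/2:ℝ)^J := by
        have e1 : ∑' j, g1 j = J * eps n := by
          rw [tsum_eq_sum (s := Finset.range J)
            (fun j hj => by rw [hg1]; simp only [Finset.mem_range] at hj; simp [hj])]
          rw [hg1]
          rw [Finset.sum_congr rfl (fun j hj => if_pos (Finset.mem_range.mp hj))]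
          rw [Finset.sum_const, Finset.card_range, nsmul_eq_mul]
        have e2 : ∑' j, g2 j = (1/2:ℝ)^J := by
          rw [← Summable.sum_add_tsum_nat_add J hs2]
          have z1 : ∑ j ∈ Finset.range J, g2 j = 0 :=
            Finset.sum_eq_zero (fun j hj => by
              rw [hg2]; simp [Finset.mem_range.mp hj])
          have z2 : ∑' j, g2 (j + J) = (1/2:ℝ)^J := by
            rw [show (fun j => g2 (j + J)) = fun j => wfn (j + J) from
              funext (fun j => by rw [hg2]; simp [(by omega : ¬ j + J < J)])]
            exact tsum_wfn_add J
          rw [z1, z2, zero_add]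
        rw [e1, e2]
  
/-- divergence of the sum of `(1/2)^(max n (Bfn (1+i)))` -/
lemma exists_sum_ge (n : ℕ) (L : ℝ) :
    ∃ m : ℕ, L ≤ ∑ i ∈ Finset.range m, (1/2:ℝ) ^ (max n (Bfn (1+i))) := by
  obtain ⟨K, hK⟩ := pow_unbounded_of_one_lt (L * 2^n / 4) (by norm_num : (1:ℝ) < 2)
  refine ⟨Afn K, ?_⟩
  have hterm : ∀ i ∈ Finset.range (Afn K), ((1/2:ℝ)^n * (1/2)^K)
      ≤ (1/2:ℝ) ^ (max n (Bfn (1+i))) := by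
    intro i hi
    have hiK : 1 + i ≤ Afn K := by
      have := Finset.mem_range.mp hi; omega
    have hB : Bfn (1+i) ≤ K := Bfn_le_of_le_Afn hiK
    have hexp : max n (Bfn (1+i)) ≤ n + K :=
      max_le (by omega) (by omega)
    calc (1/2:ℝ)^n * (1/2)^K = (1/2:ℝ)^(n+K) := by rw [pow_add]
      _ ≤ (1/2:ℝ) ^ (max n (Bfn (1+i))) :=
        pow_le_pow_of_le_one (by norm_num) (by norm_num) hexp
  calc L ≤ (Afn K) * ((1/2:ℝ)^n * (1/2)^K) := by
        have h4 : (Afn K : ℝ) = 4^(K+1) := by rw [Afn]; push_cast; ring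
        rw [h4]
        have hp : (4:ℝ)^K * (1/2)^K = 2^K := by
          rw [← mul_pow]; norm_num
        have hhalf : (1/2:ℝ)^n = (2^n)⁻¹ := by
          rw [one_div, inv_pow]
        have hh : (4:ℝ)^(K+1) * ((1/2)^n * (1/2)^K) = 4 * 2^K / 2^n := by
          calc (4:ℝ)^(K+1) * ((1/2)^n * (1/2)^K)
              = 4 * ((4^K * (1/2)^K) * (1/2)^n) := by rw [pow_succ]; ring
            _ = 4 * (2^K * (1/2)^n) := by rw [hp]
            _ = 4 * 2^K / 2^n := by rw [hhalf]; ring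
        rw [hh, le_div_iff₀ (by positivity : (0:ℝ) < 2^n)]
        linarith [hK]
      _ ≤ ∑ i ∈ Finset.range (Afn K), (1/2:ℝ) ^ (max n (Bfn (1+i))) := by
        have := Finset.card_nsmul_le_sum (Finset.range (Afn K))
          (fun i => (1/2:ℝ) ^ (max n (Bfn (1+i)))) ((1/2:ℝ)^n * (1/2)^K) hterm
        rwa [Finset.card_range, nsmul_eq_mul] at this

lemma exists_prod_le (n : ℕ) (δ : ℝ) (hδ : 0 < δ) :
    ∃ m : ℕ, 2 * ∏ i ∈ Finset.range m, (1 - (1/2:ℝ) ^ (max n (Bfn (1+i)))) ≤ δ / 2 := by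
  obtain ⟨m, hm⟩ := exists_sum_ge n (Real.log (8 / δ))
  refine ⟨m, ?_⟩
  have hexp : ∏ i ∈ Finset.range m, (1 - (1/2:ℝ) ^ (max n (Bfn (1+i))))
      ≤ Real.exp (-(∑ i ∈ Finset.range m, (1/2:ℝ) ^ (max n (Bfn (1+i))))) := by
    rw [← Finset.sum_neg_distrib, Real.exp_sum]
    apply Finset.prod_le_prod (fun i _ => prod_factor_nonneg _)
    intro i _
    have := Real.add_one_le_exp (-(1/2:ℝ) ^ (max n (Bfn (1+i))))
    linarith
  have h2 : Real.exp (-(∑ i ∈ Finset.range m, (1/2:ℝ) ^ (max n (Bfn (1+i)))))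
      ≤ Real.exp (-(Real.log (8 / δ))) := by
    apply Real.exp_le_exp.mpr
    linarith
  have h3 : Real.exp (-(Real.log (8 / δ))) = δ / 8 := by
    rw [← Real.log_inv, Real.exp_log (by positivity)]
    rw [inv_div]
  nlinarith [hexp, h2, h3]

lemma exists_small {δ : ℝ} (hδ : 0 < δ) (n₀ : ℕ) :
    ∃ n, n₀ ≤ n ∧ ∃ m, betaFn m n 1 ≤ δ := by
  obtain ⟨J, hJ⟩ := exists_pow_lt_of_lt_one (x := δ/32) (by positivity)
    (by norm_num : (1/2:ℝ) < 1)
  obtain ⟨J2, hJ2⟩ := exists_pow_lt_of_lt_one (x := δ/(32*(J+1)))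
    (by positivity) (by norm_num : (1/2:ℝ) < 1)
  set n := max n₀ J2 with hndef
  refine ⟨n, le_max_left _ _, ?_⟩
  have hepsn : eps n ≤ (1/2:ℝ)^J2 :=
    le_trans (eps_le_half_pow n)
      (pow_le_pow_of_le_one (by norm_num) (by norm_num) (le_max_right _ _))
  have hsum : ∀ m, ∑ j ∈ Finset.range m, eps (max n (Bfn (1+j))) ≤ δ/16 := by
    intro m
    have h1 := sum_eps_le (n := n) (J := J) m
    have h2 : (J:ℝ) * eps n ≤ δ/32 := by
      have hstep1 : (J:ℝ) * eps n ≤ (J+1) * (1/2:ℝ)^J2 := by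
        have := (eps_pos n).le
        nlinarith [hepsn, Nat.cast_nonneg (α := ℝ) J]
      have hJp : (0:ℝ) < (J:ℝ) + 1 := by positivity
      have hstep2 : ((J:ℝ)+1) * ((1/2:ℝ)^J2) ≤ ((J:ℝ)+1) * (δ/(32*(J+1))) :=
        mul_le_mul_of_nonneg_left hJ2.le hJp.le
      have hcancel : ((J:ℝ)+1) * (δ/(32*((J:ℝ)+1))) = δ/32 := by
        field_simp
      linarith
    linarith [hJ.le]
  obtain ⟨m, hm⟩ := exists_prod_le n δ hδ
  refine ⟨m, ?_⟩
  calc betaFn m n 1 ≤ 2 * ∏ i ∈ Finset.range m, (1 - (1/2:ℝ) ^ (max n (Bfn (1+i))))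
        + 8 * ∑ j ∈ Finset.range m, eps (max n (Bfn (1+j))) := betaFn_le_closed m n 1
    _ ≤ δ/2 + 8 * (δ/16) := by
        have := hsum m
        have h8 : 8 * ∑ j ∈ Finset.range m, eps (max n (Bfn (1+j))) ≤ 8 * (δ/16) := by
          linarith
        linarith [hm]
    _ = δ := by ring

end Numeric





end ReiterLiouville

/-- **Reiter's condition implies the Liouville property for σ-compact metric semigroups
with identity**: there is a tight Borel probability measure `π` such that every
`π`-harmonic function in `LUC S` is constant. -/
theorem reiter_implies_liouville_metric_monoid
    {S : Type*} [Monoid S] [MetricSpace S] [ContinuousMul S] [SigmaCompactSpace S]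
    [MeasurableSpace S] [BorelSpace S]
    (hR : ReiterCond S) :
    ∃ π : Measure S, IsProbabilityMeasure π ∧ IsTightMeas π ∧
      ∀ f : S →ᵇ ℂ, f ∈ LUC S →
        (∀ x : S, ∫ y, f (x * y) ∂π = f x) → ∃ c : ℂ, ∀ x : S, f x = c := by
  refine ⟨ReiterLiouville.pim hR, ReiterLiouville.pim_prob hR,
    ReiterLiouville.pim_tight hR, ?_⟩
  intro f _ hharm
  refine ⟨f 1, fun x => ?_⟩
  have key : ∀ η : ℝ, 0 < η → ‖f x - f 1‖ ≤ η := by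
    intro η hη
    obtain ⟨n₀, hx⟩ := exists_mem_compactCovering x
    obtain ⟨n, hn, m, hm⟩ := ReiterLiouville.exists_small
      (show (0:ℝ) < η/(‖f‖+1) by positivity) n₀
    have hx' : x ∈ ReiterLiouville.Kn hR n 1 :=
      ReiterLiouville.mem_Kn_one hR (compactCovering_subset S hn hx)
    have h1' : (1:S) ∈ ReiterLiouville.Kn hR n 1 := ReiterLiouville.one_mem_Kn hR n 1
    have hmain := ReiterLiouville.main_ind hR f hharm m n 1 x 1 hx' h1'
    have hb0 := ReiterLiouville.betaFn_nonneg m n 1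
    have hfpos : (0:ℝ) < ‖f‖ + 1 := by positivity
    calc ‖f x - f 1‖ ≤ ‖f‖ * ReiterLiouville.betaFn m n 1 := hmain
      _ ≤ ‖f‖ * (η/(‖f‖+1)) := mul_le_mul_of_nonneg_left hm (norm_nonneg f)
      _ ≤ η := by
          rw [mul_div_assoc', div_le_iff₀ hfpos]
          nlinarith [norm_nonneg f, hη.le]
  have hz : ‖f x - f 1‖ ≤ 0 := by
    by_contra hc
    push_neg at hc
    have := key (‖f x - f 1‖ / 2) (by linarith)
    linarith
  have := norm_le_zero_iff.mp hz
  exact sub_eq_zero.mp this
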